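/- In every valid Septoku board, each of the seven symbols appears in at least five of the 37 cells. -/

import Mathlib

/-- Cell `n` (numbered 1 through 37) of the Septoku board, as an element of `Fin 37`. -/
def cell (n : ℕ) : Fin 37 := ⟨(n - 1) % 37, Nat.mod_lt _ (by norm_num)⟩

/-- The set of cells with the given (1-based) numbers. -/
def cells (l : List ℕ) : Finset (Fin 37) := (l.map cell).toFinset

/-- The 21 rows of the Septoku board (7 horizontal and 7 in each diagonal direction). -/
def septokuRows : List (Finset (Fin 37)) :=
  [cells [1,2,3,4], cells [5,6,7,8,9], cells [10,11,12,13,14,15],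
   cells [16,17,18,19,20,21,22], cells [23,24,25,26,27,28],
   cells [29,30,31,32,33], cells [34,35,36,37],
   cells [1,5,10,16], cells [2,6,11,17,23], cells [3,7,12,18,24,29],
   cells [4,8,13,19,25,30,34], cells [9,14,20,26,31,35],
   cells [15,21,27,32,36], cells [22,28,33,37],
   cells [4,9,15,22], cells [3,8,14,21,28], cells [2,7,13,20,27,33],
   cells [1,6,12,19,26,32,37], cells [5,11,18,25,31,36],
   cells [10,17,24,30,35], cells [16,23,29,34]]

/-- The 7 circular regions of the Septoku board (centered at cells 6,8,17,19,21,30,32). -/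
def septokuCircles : List (Finset (Fin 37)) :=
  [cells [1,2,5,6,7,11,12], cells [3,4,7,8,9,13,14],
   cells [10,11,16,17,18,23,24], cells [12,13,18,19,20,25,26],
   cells [14,15,20,21,22,27,28], cells [24,25,29,30,31,34,35],
   cells [26,27,31,32,33,36,37]]

/-- A valid Septoku board: a function from the 37 cells to the 7 symbols that is
injective on each of the 21 rows and attains all seven symbols on each circle. -/
def IsSeptoku (f : Fin 37 → Fin 7) : Prop :=
  (∀ R ∈ septokuRows, Set.InjOn f ↑R) ∧
  (∀ C ∈ septokuCircles, ∀ v : Fin 7, ∃ x ∈ C, f x = v)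

/-! ### Auxiliary bitmask machinery -/

/-- A big bitmask: bit `37*a + b` is set iff cells `a` and `b` (0-indexed) are
"compatible", i.e. `a = b` or no row contains both. -/
def bigC : ℕ := 6627567289396920153584316004190568163894939298701173904164103529566307944959564407547061543494635145643588804031049829147347379278305785282047126445302814535253066072144438885712943233936443859522438063749151458292200979574114174629316920576198959766112763607364006096492140307084911145855652510550165435027746994752779477276449209593714763711238461932187948230932458665039680792723659128223037779210554314552769

/-- Bitmasks of the seven circles (bit `x` set iff 0-indexed cell `x` is in the circle). -/
def cMaskL : List ℕ := [3187, 12748, 12813824, 51255296, 205021184, 27674017792, 110696071168]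

def full37 : ℕ := 137438953471

def cmpMask (a : ℕ) : ℕ := (bigC >>> (37*a)) &&& full37

/-- The main finite check: no four pairwise-compatible cells hit all seven circles. -/
def checkB : Bool := (List.range 37).all fun a => (List.range 37).all fun b =>
  !(cmpMask a).testBit b ||
  ((List.range 37).all fun c =>
    !((cmpMask a &&& cmpMask b).testBit c) ||
    ((cmpMask a &&& cmpMask b &&& cmpMask c) &&&
      (full37 ^^^ (cMaskL.foldl (fun acc m =>
        if m &&& ((1 <<< a) ||| (1 <<< b) ||| (1 <<< c)) == 0 then acc ||| (full37 ^^^ m) else acc) 0))) == 0)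

set_option maxHeartbeats 12000000 in
theorem checkB_true : checkB = true := by decide

theorem rowBridge : ∀ x y : Fin 37, bigC.testBit (37*x.val+y.val) = false →
    ∃ R ∈ septokuRows, x ∈ R ∧ y ∈ R ∧ x ≠ y := by decide

theorem circleBridge : ∀ m ∈ cMaskL, ∃ C ∈ septokuCircles,
    ∀ x : Fin 37, x ∈ C → m.testBit x.val = true := by decide

theorem cmp_testBit (x y : ℕ) (hy : y < 37) :
    (cmpMask x).testBit y = bigC.testBit (37*x + y) := by
  rw [cmpMask, Nat.testBit_and, Nat.testBit_shiftRight]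
  have h : full37.testBit y = true := by
    rw [show full37 = 2^37-1 by norm_num [full37], Nat.testBit_two_pow_sub_one]
    simp [hy]
  rw [h, Bool.and_true]

theorem full37_testBit {y : ℕ} (hy : y < 37) : full37.testBit y = true := by
  rw [show full37 = 2^37-1 by norm_num [full37], Nat.testBit_two_pow_sub_one]
  simp [hy]

theorem foldl_bit (s j : ℕ) (l : List ℕ) : ∀ acc : ℕ,
    ((l.foldl (fun acc m => if m &&& s == 0 then acc ||| (full37 ^^^ m) else acc) acc).testBit j = true) →
    acc.testBit j = true ∨ ∃ m ∈ l, m &&& s = 0 ∧ (full37 ^^^ m).testBit j = true := by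
  induction l with
  | nil => intro acc h; exact Or.inl h
  | cons m' t ih =>
    intro acc h
    simp only [List.foldl_cons] at h
    by_cases hc : m' &&& s = 0
    · rw [if_pos (show (m' &&& s == 0) = true by simp [hc])] at h
      rcases ih _ h with hh | ⟨m, hm, h1, h2⟩
      · rw [Nat.testBit_or] at hh
        rcases Bool.or_eq_true_iff.mp hh with hh | hh
        · exact Or.inl hh
        · exact Or.inr ⟨m', List.mem_cons_self, hc, hh⟩
      · exact Or.inr ⟨m, List.mem_cons_of_mem _ hm, h1, h2⟩
    · rw [if_neg (show ¬((m' &&& s == 0) = true) by simp [hc])] at h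
      rcases ih _ h with hh | ⟨m, hm, h1, h2⟩
      · exact Or.inl hh
      · exact Or.inr ⟨m, List.mem_cons_of_mem _ hm, h1, h2⟩

theorem exists_four {α : Type*} [DecidableEq α] (S : Finset α) (x0 : α) (hx0 : x0 ∈ S)
    (h4 : S.card ≤ 4) : ∃ a b c d, a ∈ S ∧ b ∈ S ∧ c ∈ S ∧ d ∈ S ∧
      ∀ s ∈ S, s = a ∨ s = b ∨ s = c ∨ s = d := by
  have hmem : ∀ i : ℕ, S.toList.getD i x0 ∈ S := by
    intro i
    by_cases h : i < S.toList.length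
    · rw [List.getD_eq_getElem S.toList x0 h]
      exact Finset.mem_toList.mp (List.getElem_mem h)
    · rw [List.getD_eq_default S.toList x0 (le_of_not_gt h)]
      exact hx0
  refine ⟨S.toList.getD 0 x0, S.toList.getD 1 x0, S.toList.getD 2 x0, S.toList.getD 3 x0,
    hmem 0, hmem 1, hmem 2, hmem 3, ?_⟩
  intro s hs
  obtain ⟨i, hi, hg⟩ := List.mem_iff_getElem.mp (Finset.mem_toList.mpr hs)
  have hi4 : i < 4 := lt_of_lt_of_le hi (by rw [Finset.length_toList]; exact h4)
  interval_cases i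
  · exact Or.inl (by rw [List.getD_eq_getElem S.toList x0 hi]; exact hg.symm)
  · exact Or.inr (Or.inl (by rw [List.getD_eq_getElem S.toList x0 hi]; exact hg.symm))
  · exact Or.inr (Or.inr (Or.inl (by rw [List.getD_eq_getElem S.toList x0 hi]; exact hg.symm)))
  · exact Or.inr (Or.inr (Or.inr (by rw [List.getD_eq_getElem S.toList x0 hi]; exact hg.symm)))

/-- In every valid Septoku board, each of the seven symbols appears in at least five cells. -/
theorem septoku_each_symbol_at_least_five (f : Fin 37 → Fin 7) (hf : IsSeptoku f) :
    ∀ v : Fin 7, 5 ≤ (Finset.univ.filter (fun x => f x = v)).card := by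
  intro v
  by_contra hlt
  push_neg at hlt
  set S := Finset.univ.filter (fun x => f x = v) with hSdef
  have hcard : S.card ≤ 4 := by omega
  have hmemS : ∀ x : Fin 37, f x = v → x ∈ S := fun x hx =>
    Finset.mem_filter.mpr ⟨Finset.mem_univ x, hx⟩
  have hSv : ∀ x ∈ S, f x = v := fun x hx => (Finset.mem_filter.mp hx).2
  -- pairwise compatibility of cells carrying the symbol v
  have hbit : ∀ x ∈ S, ∀ y ∈ S, bigC.testBit (37*x.val+y.val) = true := by
    intro x hx y hy
    by_contra hb
    rw [Bool.not_eq_true] at hb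
    obtain ⟨R, hR, hxR, hyR, hxy⟩ := rowBridge x y hb
    exact hxy (hf.1 R hR hxR hyR ((hSv x hx).trans (hSv y hy).symm))
  have hcmp : ∀ x ∈ S, ∀ y ∈ S, (cmpMask x.val).testBit y.val = true := by
    intro x hx y hy
    rw [cmp_testBit x.val y.val y.isLt]
    exact hbit x hx y hy
  -- S is nonempty
  have hC0 : cells [1,2,5,6,7,11,12] ∈ septokuCircles := by
    simp [septokuCircles]
  obtain ⟨x0, _, hx0v⟩ := hf.2 _ hC0 v
  obtain ⟨a, b, c, d, ha, hb, hc, hd, hcover⟩ := exists_four S x0 (hmemS _ hx0v) hcard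
  -- instantiate the finite check
  have h1 := checkB_true
  unfold checkB at h1
  simp only [List.all_eq_true, List.mem_range] at h1
  have h2 := h1 a.val a.isLt b.val b.isLt
  rcases Bool.or_eq_true_iff.mp h2 with h2' | h2'
  · rw [Bool.not_eq_true'] at h2'
    rw [hcmp a ha b hb] at h2'
    exact absurd h2' (by simp)
  rw [List.all_eq_true] at h2'
  have h3 := h2' c.val (List.mem_range.mpr c.isLt)
  rcases Bool.or_eq_true_iff.mp h3 with h3' | h3'
  · rw [Bool.not_eq_true'] at h3'
    rw [Nat.testBit_and, hcmp a ha c hc, hcmp b hb c hc] at h3'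
    exact absurd h3' (by simp)
  have heq : ((cmpMask a.val &&& cmpMask b.val &&& cmpMask c.val) &&&
      (full37 ^^^ (cMaskL.foldl (fun acc m =>
        if m &&& ((1 <<< a.val) ||| (1 <<< b.val) ||| (1 <<< c.val)) == 0
        then acc ||| (full37 ^^^ m) else acc) 0))) = 0 := eq_of_beq h3'
  -- bit d of the masked term is 0, but d is compatible with a,b,c
  have hMd : (cmpMask a.val &&& cmpMask b.val &&& cmpMask c.val).testBit d.val = true := by
    rw [Nat.testBit_and, Nat.testBit_and, hcmp a ha d hd, hcmp b hb d hd, hcmp c hc d hd]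
    rfl
  have hzero : ((cmpMask a.val &&& cmpMask b.val &&& cmpMask c.val) &&&
      (full37 ^^^ (cMaskL.foldl (fun acc m =>
        if m &&& ((1 <<< a.val) ||| (1 <<< b.val) ||| (1 <<< c.val)) == 0
        then acc ||| (full37 ^^^ m) else acc) 0))).testBit d.val = false := by
    rw [heq]; exact Nat.zero_testBit _
  rw [Nat.testBit_and, Nat.testBit_xor, hMd, full37_testBit d.isLt] at hzero
  have hU : (cMaskL.foldl (fun acc m =>
      if m &&& ((1 <<< a.val) ||| (1 <<< b.val) ||| (1 <<< c.val)) == 0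
      then acc ||| (full37 ^^^ m) else acc) 0).testBit d.val = true := by
    cases hUc : (cMaskL.foldl (fun acc m =>
      if m &&& ((1 <<< a.val) ||| (1 <<< b.val) ||| (1 <<< c.val)) == 0
      then acc ||| (full37 ^^^ m) else acc) 0).testBit d.val
    · rw [hUc] at hzero; simp at hzero
    · rfl
  rcases foldl_bit ((1 <<< a.val) ||| (1 <<< b.val) ||| (1 <<< c.val)) d.val cMaskL 0 hU with
    hz | ⟨m, hm, hms, hmd⟩
  · rw [Nat.zero_testBit] at hz; exact absurd hz (by simp)
  have hmdf : m.testBit d.val = false := by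
    rw [Nat.testBit_xor, full37_testBit d.isLt] at hmd
    cases hmb : m.testBit d.val
    · rfl
    · rw [hmb] at hmd; simp at hmd
  -- the circle corresponding to m contains a cell with symbol v, which must be a, b, c, or d
  obtain ⟨C, hCmem, hCbit⟩ := circleBridge m hm
  obtain ⟨x, hxC, hxv⟩ := hf.2 C hCmem v
  have hbx : m.testBit x.val = true := hCbit x hxC
  have hdisj : ∀ j : ℕ, (m &&& ((1 <<< a.val) ||| (1 <<< b.val) ||| (1 <<< c.val))).testBit j = false := by
    intro j; rw [hms]; exact Nat.zero_testBit _
  rcases hcover x (hmemS x hxv) with rfl | rfl | rfl | rfl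
  · have := hdisj x.val
    simp [Nat.testBit_and, Nat.testBit_or, Nat.one_shiftLeft, Nat.testBit_two_pow_self, hbx] at this
  · have := hdisj x.val
    simp [Nat.testBit_and, Nat.testBit_or, Nat.one_shiftLeft, Nat.testBit_two_pow_self, hbx] at this
  · have := hdisj x.val
    simp [Nat.testBit_and, Nat.testBit_or, Nat.one_shiftLeft, Nat.testBit_two_pow_self, hbx] at this
  · rw [hbx] at hmdf; exact absurd hmdf (by simp)
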